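/- For f locally absolutely continuous on (a,b) with α_{s_a}f ∈ L²((a,b);dx), s_a ≤ -1, one has the pointwise bound |f(x)/(x-a)^{1/2} - F·(x-a)^{s_a}| ≤ (-2 s_a)^{1/2} ‖α_{s_a}f‖_{L²((a,x))} for all x ∈ (a,b), where F = lim_{c→a⁺}(c-a)^{-s_a-1/2} f(c). -/

import Mathlib

open MeasureTheory Set Filter

/-- For `s_a ≤ -1` and `f` locally absolutely continuous with `α_{s_a} f ∈ L²`,
one has `|f(x)/(x-a)^{1/2} - F (x-a)^{s_a}| ≤ (-2s_a)^{1/2} ‖α_{s_a} f‖_{L²((a,x))}`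
where `F = lim_{c→a⁺} (c-a)^{-s_a-1/2} f(c)`. -/
theorem stmt7 (a b s : ℝ) (hab : a < b) (hs : s ≤ -1)
    (f f' : ℝ → ℂ) (F : ℂ)
    (hderiv : ∀ x ∈ Ioo a b, HasDerivAt f (f' x) x)
    (hαL2 : IntegrableOn
      (fun x => ‖f' x - (((s + 1/2) / (x - a) : ℝ) : ℂ) * f x‖ ^ 2) (Ioo a b))
    (hF : Tendsto (fun c => (((c - a) ^ (-s - 1/2 : ℝ) : ℝ) : ℂ) * f c)
      (nhdsWithin a (Ioi a)) (nhds F)) :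
    ∀ x ∈ Ioo a b,
      ‖f x / (((x - a) ^ ((1 : ℝ)/2) : ℝ) : ℂ) - F * (((x - a) ^ (s : ℝ) : ℝ) : ℂ)‖ ≤
        (-2 * s) ^ ((1 : ℝ)/2) *
          (∫ t in Ioo a x,
            ‖f' t - (((s + 1/2) / (t - a) : ℝ) : ℂ) * f t‖ ^ 2) ^ ((1 : ℝ)/2) := by
  intro x hx
  obtain ⟨hax, hxb⟩ := hx
  set α : ℝ → ℂ := fun t => f' t - (((s + 1/2) / (t - a) : ℝ) : ℂ) * f t with hαdef
  set p : ℝ := -s - 1/2 with hpdef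
  have hp1 : (1:ℝ)/2 ≤ p := by rw [hpdef]; linarith
  set φ : ℝ → ℝ := fun t => (t - a) ^ p with hφdef
  set g : ℝ → ℂ := fun c => ((φ c : ℝ) : ℂ) * f c with hgdef
  set h : ℝ → ℂ := fun t => ((φ t : ℝ) : ℂ) * α t with hhdef
  have hφcont : Continuous φ :=
    (Real.continuous_rpow_const (by rw [hpdef]; linarith : (0:ℝ) ≤ p)).comp (continuous_sub_right a)
  have hφmeas : Measurable φ := hφcont.measurable
  -- measurability of α
  have hmeasα : AEStronglyMeasurable α (volume.restrict (Ioo a b)) := by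
    have h1 : AEStronglyMeasurable f (volume.restrict (Ioo a b)) := by
      apply ContinuousOn.aestronglyMeasurable _ measurableSet_Ioo
      exact fun t ht => ((hderiv t ht).continuousAt).continuousWithinAt
    have h2 : AEStronglyMeasurable f' (volume.restrict (Ioo a b)) := by
      have : ∀ t ∈ Ioo a b, f' t = deriv f t := fun t ht => ((hderiv t ht).deriv).symm
      refine AEStronglyMeasurable.congr (measurable_deriv f).aestronglyMeasurable ?_
      filter_upwards [ae_restrict_mem measurableSet_Ioo] with t ht using (this t ht).symm
    have h3 : Measurable fun t : ℝ => (((s + 1/2) / (t - a) : ℝ) : ℂ) :=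
      Complex.measurable_ofReal.comp (measurable_const.div (measurable_id.sub_const a))
    exact h2.sub (h3.aestronglyMeasurable.mul h1)
  have hαL2' : MemLp α 2 (volume.restrict (Ioo a b)) :=
    (memLp_two_iff_integrable_sq_norm hmeasα).2 hαL2
  have hαL2x : MemLp α 2 (volume.restrict (Ioo a x)) :=
    hαL2'.mono_measure (Measure.restrict_mono (Ioo_subset_Ioo le_rfl hxb.le) le_rfl)
  -- φ is L² on Ioo a y for y > a
  have hφsq : ∀ y, IntegrableOn (fun t => (t - a) ^ (2*p)) (Ioo a y) := by
    intro y
    rcases le_or_gt y a with hy | hy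
    · rw [Ioo_eq_empty (not_lt.2 hy)]; exact integrableOn_empty
    · have h1 : IntervalIntegrable (fun t : ℝ => t ^ (2*p)) volume 0 (y - a) :=
        intervalIntegral.intervalIntegrable_rpow' (by rw [hpdef]; linarith)
      have h2 := h1.comp_sub_right a
      rw [zero_add, sub_add_cancel] at h2
      exact ((intervalIntegrable_iff_integrableOn_Ioc_of_le hy.le).1 h2).mono_set Ioo_subset_Ioc_self
  have hφL2 : ∀ y, MemLp φ 2 (volume.restrict (Ioo a y)) := by
    intro y
    refine (memLp_two_iff_integrable_sq_norm hφmeas.aestronglyMeasurable).2 ?_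
    refine (hφsq y).congr_fun ?_ measurableSet_Ioo
    intro t ht
    have hta : (0:ℝ) < t - a := sub_pos.2 ht.1
    rw [hφdef]
    simp only [Real.norm_eq_abs, abs_of_nonneg (Real.rpow_nonneg hta.le p), sq]
    rw [← Real.rpow_add hta, two_mul]
  -- h is integrable on Ioo a y
  have hL2mul : ∀ (μ : Measure ℝ), MemLp φ 2 μ → MemLp α 2 μ → Integrable (h) μ := by
    intro μ h1 h2
    have : MemLp (φ • α) 1 μ := h2.smul h1
    rw [memLp_one_iff_integrable] at this
    refine this.congr (Eventually.of_forall fun t => ?_)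
    simp [hhdef, Complex.real_smul]
  have hint_b : IntegrableOn h (Ioo a b) := hL2mul _ (hφL2 b) hαL2'
  have hint_x : IntegrableOn h (Ioo a x) := hL2mul _ (hφL2 x) hαL2x
  -- derivative of g
  have hgderiv : ∀ t ∈ Ioo a b, HasDerivAt g (h t) t := by
    intro t ht
    have hta : (0:ℝ) < t - a := sub_pos.2 ht.1
    have h1 : HasDerivAt (fun c : ℝ => c - a) 1 t := (hasDerivAt_id t).sub_const a
    have h2 : HasDerivAt (fun y : ℝ => y ^ p) (p * (t - a) ^ (p - 1)) (t - a) :=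
      Real.hasDerivAt_rpow_const (Or.inl hta.ne')
    have h3 : HasDerivAt φ (p * (t - a) ^ (p - 1)) t := by
      have h5 := h2.comp t h1; rw [mul_one] at h5; exact h5
    have h4 := (h3.ofReal_comp).mul (hderiv t ht)
    convert h4 using 1
    · rfl
    · rfl
    have hsub : (t - a) ^ (p - 1) = (t - a) ^ p / (t - a) := by
      rw [Real.rpow_sub hta, Real.rpow_one]
    have hcoef : p * ((t - a) ^ p / (t - a)) = -((s + 1/2) / (t - a) * (t - a) ^ p) := by
      rw [hpdef]; field_simp; ring
    simp only [hhdef, hαdef, hφdef, hsub, hcoef]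
    push_cast
    ring
  -- FTC
  have hFTC : ∀ u ∈ Ioo a x, g x - g u = ∫ t in Ioo u x, h t := by
    intro u hu
    have hsub : uIcc u x ⊆ Ioo a b := by
      rw [uIcc_of_le hu.2.le]
      exact fun t ht => ⟨lt_of_lt_of_le hu.1 ht.1, lt_of_le_of_lt ht.2 hxb⟩
    have hii : IntervalIntegrable h volume u x :=
      (hint_b.mono_set hsub).intervalIntegrable
    have := intervalIntegral.integral_eq_sub_of_hasDerivAt
      (fun t ht => hgderiv t (hsub ht)) hii
    rw [← this, intervalIntegral.integral_of_le hu.2.le, integral_Ioc_eq_integral_Ioo]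
  -- limits
  have hlim1 : Tendsto (fun u => g x - g u) (nhdsWithin a (Ioi a)) (nhds (g x - F)) :=
    tendsto_const_nhds.sub hF
  have hlim2 : Tendsto (fun u => ∫ t in Ioo u x, h t) (nhdsWithin a (Ioi a))
      (nhds (∫ t in Ioo a x, h t)) := by
    have key : Tendsto (fun u => ∫ t in Ioo a x, (Ioo u x).indicator h t)
        (nhdsWithin a (Ioi a)) (nhds (∫ t in Ioo a x, h t)) := by
      apply tendsto_integral_filter_of_dominated_convergence (fun t => ‖h t‖)
      · exact Eventually.of_forall fun u => hint_x.1.indicator measurableSet_Ioo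
      · exact Eventually.of_forall fun u =>
          Eventually.of_forall fun t => norm_indicator_le_norm_self h t
      · exact hint_x.norm
      · filter_upwards [ae_restrict_mem measurableSet_Ioo] with t ht
        refine tendsto_const_nhds.congr' ?_
        filter_upwards [Ioo_mem_nhdsGT_of_mem (Set.left_mem_Ico.2 ht.1)] with u hu
        exact (indicator_of_mem (Set.mem_Ioo.2 ⟨hu.2, ht.2⟩) h).symm
    refine key.congr' ?_
    filter_upwards [Ioo_mem_nhdsGT_of_mem (Set.left_mem_Ico.2 hax)] with u hu
    rw [setIntegral_indicator measurableSet_Ioo]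
    congr 1
    rw [Ioo_inter_Ioo, max_eq_right hu.1.le, min_self]
  have heq : g x - F = ∫ t in Ioo a x, h t := by
    refine tendsto_nhds_unique hlim1 (hlim2.congr' ?_)
    filter_upwards [Ioo_mem_nhdsGT_of_mem (Set.left_mem_Ico.2 hax)] with u hu
    exact (hFTC u hu).symm
  -- Hölder inequality
  have hxa : (0:ℝ) < x - a := sub_pos.2 hax
  have hconj : Real.HolderConjugate 2 2 := Real.HolderConjugate.two_two
  have h2e : ENNReal.ofReal (2:ℝ) = 2 := by
    rw [ENNReal.ofReal_ofNat]
  have hφ2 : MemLp φ (ENNReal.ofReal (2:ℝ)) (volume.restrict (Ioo a x)) := by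
    rw [h2e]; exact hφL2 x
  have hα2 : MemLp α (ENNReal.ofReal (2:ℝ)) (volume.restrict (Ioo a x)) := by
    rw [h2e]; exact hαL2x
  have hφnn : 0 ≤ᵐ[volume.restrict (Ioo a x)] φ := by
    filter_upwards [ae_restrict_mem measurableSet_Ioo] with t ht
    exact Real.rpow_nonneg (sub_nonneg.2 ht.1.le) p
  have hholder := integral_mul_le_Lp_mul_Lq_of_nonneg (μ := volume.restrict (Ioo a x)) hconj
    hφnn (Eventually.of_forall fun t => norm_nonneg (α t)) hφ2 hα2.norm
  have hnorm : ‖g x - F‖ ≤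
      (∫ t in Ioo a x, φ t ^ (2:ℝ)) ^ ((1:ℝ)/2) * (∫ t in Ioo a x, ‖α t‖ ^ (2:ℝ)) ^ ((1:ℝ)/2) := by
    rw [heq]
    refine (norm_integral_le_integral_norm _).trans ?_
    have hcongr : ∫ t in Ioo a x, ‖h t‖ = ∫ t in Ioo a x, φ t * ‖α t‖ := by
      refine setIntegral_congr_ae measurableSet_Ioo (Eventually.of_forall fun t ht => ?_)
      rw [hhdef]
      simp only [norm_mul, Complex.norm_real, Real.norm_eq_abs,
        abs_of_nonneg (Real.rpow_nonneg (sub_nonneg.2 ht.1.le) p : (0:ℝ) ≤ φ t)]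
      exact congrArg (· * ‖α t‖) (abs_of_nonneg (Real.rpow_nonneg (sub_nonneg.2 ht.1.le) p))
    rw [hcongr]
    exact hholder
  -- value of the φ integral
  have hIφ : ∫ t in Ioo a x, φ t ^ (2:ℝ) = (x - a) ^ (-2*s) / (-2*s) := by
    have h1 : EqOn (fun t => φ t ^ (2:ℝ)) (fun t => (t - a) ^ (2*p)) (Ioo a x) := by
      intro t ht
      have hta : (0:ℝ) < t - a := sub_pos.2 ht.1
      simp only [hφdef]
      rw [← Real.rpow_mul hta.le, mul_comm]
    rw [setIntegral_congr_fun measurableSet_Ioo h1, ← integral_Ioc_eq_integral_Ioo,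
      ← intervalIntegral.integral_of_le hax.le]
    have h2 := intervalIntegral.integral_comp_sub_right (a := a) (b := x)
      (fun t => t ^ (2*p)) a
    rw [h2, sub_self]
    rw [integral_rpow (Or.inl (by rw [hpdef]; linarith))]
    rw [Real.zero_rpow (by rw [hpdef]; intro hc; nlinarith : 2*p + 1 ≠ 0), sub_zero]
    have h3 : 2*p + 1 = -2*s := by rw [hpdef]; ring
    rw [h3]
  -- the α integral matches the statement's integral
  have hIα : ∫ t in Ioo a x, ‖α t‖ ^ (2:ℝ)
      = ∫ t in Ioo a x, ‖f' t - (((s + 1/2) / (t - a) : ℝ) : ℂ) * f t‖ ^ 2 := by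
    have hsq : ∀ y : ℝ, y ^ (2:ℝ) = y ^ (2:ℕ) := fun y => by
      rw [← Real.rpow_natCast y 2]; norm_num
    refine integral_congr_ae (Eventually.of_forall fun t => ?_)
    rw [hαdef]
    exact hsq _
  have hIαnn : (0:ℝ) ≤ (∫ t in Ioo a x, ‖α t‖ ^ (2:ℝ)) ^ ((1:ℝ)/2) :=
    Real.rpow_nonneg (integral_nonneg fun t => Real.rpow_nonneg (norm_nonneg _) _) _
  -- key constant computation
  have hm2s : (1:ℝ) ≤ -2*s := by linarith
  have hkey : (x - a) ^ (s:ℝ) * ((x - a) ^ (-2*s) / (-2*s)) ^ ((1:ℝ)/2) ≤ (-2*s) ^ ((1:ℝ)/2) := by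
    have e1 : ((x - a) ^ (-2*s) / (-2*s)) ^ ((1:ℝ)/2)
        = (x - a) ^ (-s) / (-2*s) ^ ((1:ℝ)/2) := by
      rw [Real.div_rpow (Real.rpow_nonneg hxa.le _) (by linarith)]
      congr 1
      rw [← Real.rpow_mul hxa.le]
      congr 1
      ring
    rw [e1]
    have e2 : (x - a) ^ (s:ℝ) * ((x - a) ^ (-s) / (-2*s) ^ ((1:ℝ)/2))
        = ((-2*s) ^ ((1:ℝ)/2))⁻¹ := by
      rw [mul_div_assoc', ← Real.rpow_add hxa]
      simp
    rw [e2]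
    have h4 : (1:ℝ) ≤ (-2*s) ^ ((1:ℝ)/2) := Real.one_le_rpow hm2s (by norm_num)
    calc ((-2*s) ^ ((1:ℝ)/2))⁻¹ ≤ 1 := by
          rw [inv_le_one_iff₀]; right; exact h4
      _ ≤ (-2*s) ^ ((1:ℝ)/2) := h4
  -- rewrite the LHS
  have hLHS : f x / (((x - a) ^ ((1 : ℝ)/2) : ℝ) : ℂ) - F * (((x - a) ^ (s : ℝ) : ℝ) : ℂ)
      = (((x - a) ^ (s:ℝ) : ℝ) : ℂ) * (g x - F) := by
    have h1 : ((x - a) ^ (s:ℝ)) * (x - a) ^ p = ((x - a) ^ ((1:ℝ)/2))⁻¹ := by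
      rw [← Real.rpow_add hxa, ← Real.rpow_neg hxa.le]
      congr 1
      rw [hpdef]; ring
    have h2 : (((x - a) ^ (s:ℝ) : ℝ) : ℂ) * (((x - a) ^ p : ℝ) : ℂ)
        = ((((x - a) ^ ((1:ℝ)/2) : ℝ) : ℝ) : ℂ)⁻¹ := by
      rw [← Complex.ofReal_mul, h1, Complex.ofReal_inv]
    simp only [hgdef, hφdef]
    rw [div_eq_mul_inv, ← h2]
    ring
  rw [hLHS, norm_mul, Complex.norm_real, Real.norm_eq_abs,
    abs_of_nonneg (Real.rpow_nonneg hxa.le s), ← hIα]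
  calc (x - a) ^ (s:ℝ) * ‖g x - F‖
      ≤ (x - a) ^ (s:ℝ) *
        ((∫ t in Ioo a x, φ t ^ (2:ℝ)) ^ ((1:ℝ)/2) * (∫ t in Ioo a x, ‖α t‖ ^ (2:ℝ)) ^ ((1:ℝ)/2)) := by
        refine mul_le_mul_of_nonneg_left ?_ (Real.rpow_nonneg hxa.le s)
        simpa using hnorm
    _ = ((x - a) ^ (s:ℝ) * ((x - a) ^ (-2*s) / (-2*s)) ^ ((1:ℝ)/2)) *
        (∫ t in Ioo a x, ‖α t‖ ^ (2:ℝ)) ^ ((1:ℝ)/2) := by rw [hIφ]; ring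
    _ ≤ (-2*s) ^ ((1:ℝ)/2) * (∫ t in Ioo a x, ‖α t‖ ^ (2:ℝ)) ^ ((1:ℝ)/2) :=
        mul_le_mul_of_nonneg_right hkey hIαnn
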